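/- Let Y, X, Z be finite types and p, q pmfs on Y × X × Z with positive marginals, satisfying CPS: p(x | y, z) = q(x | y, z) for all x, y, z. Then for every k, x, z: q(y = k | x, z) = p(y = k | x, z) · (p(x | z) / q(x | z)) · (q(y = k | z) / p(y = k | z)). -/

import Mathlib

open Finset

/-- Key intermediate identity: under CPS,
`q(y=k|x,z) = p(y=k|x,z) · (p(x|z)/q(x|z)) · (q(y=k|z)/p(y=k|z))`. -/
theorem cps_posterior_tilt {Y X Z : Type*} [Fintype Y] [Fintype X] [Fintype Z]
    (p q : Y → X → Z → ℝ)
    (hp_pos : ∀ y x z, 0 < p y x z) (hq_pos : ∀ y x z, 0 < q y x z)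
    (hp_sum : ∑ y, ∑ x, ∑ z, p y x z = 1) (hq_sum : ∑ y, ∑ x, ∑ z, q y x z = 1)
    (hCPS : ∀ x y z,
      p y x z / (∑ x', p y x' z) = q y x z / (∑ x', q y x' z)) :
    ∀ (k : Y) (x : X) (z : Z),
      q k x z / (∑ l, q l x z) =
        (p k x z / (∑ l, p l x z)) *
          (((∑ y', p y' x z) / (∑ y', ∑ x', p y' x' z))
            / ((∑ y', q y' x z) / (∑ y', ∑ x', q y' x' z))) *
          (((∑ x', q k x' z) / (∑ y', ∑ x', q y' x' z))
            / ((∑ x', p k x' z) / (∑ y', ∑ x', p y' x' z))) := by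
  intro k x z
  have hxe : Nonempty X := ⟨x⟩
  have hye : Nonempty Y := ⟨k⟩
  have hpr : 0 < ∑ x', p k x' z := Finset.sum_pos (fun i _ => hp_pos k i z) univ_nonempty
  have hqr : 0 < ∑ x', q k x' z := Finset.sum_pos (fun i _ => hq_pos k i z) univ_nonempty
  have hpc : 0 < ∑ l, p l x z := Finset.sum_pos (fun i _ => hp_pos i x z) univ_nonempty
  have hqc : 0 < ∑ l, q l x z := Finset.sum_pos (fun i _ => hq_pos i x z) univ_nonempty
  have hpt : 0 < ∑ y', ∑ x', p y' x' z :=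
    Finset.sum_pos (fun i _ => Finset.sum_pos (fun j _ => hp_pos i j z) univ_nonempty) univ_nonempty
  have hqt : 0 < ∑ y', ∑ x', q y' x' z :=
    Finset.sum_pos (fun i _ => Finset.sum_pos (fun j _ => hq_pos i j z) univ_nonempty) univ_nonempty
  have key : p k x z * (∑ x', q k x' z) = q k x z * (∑ x', p k x' z) :=
    (div_eq_div_iff hpr.ne' hqr.ne').mp (hCPS x k z)
  field_simp
  linear_combination (-1 : ℝ) * key
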